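/- Let (𝒳, d_X) and (𝒴, d_Y) be MCMSs, let Z be a metric space, let k ≥ 1 be an integer, and let ℓ_X : X → Z and ℓ_Y : Y → Z be label functions satisfying the stability inequality: for all γ ∈ 𝒞(μ_X, μ_Y) and all ν^{(k)} ∈ 𝒞^{(k)}(m^X, m^Y), Σ_{(x,y)} Σ_{(x',y')} d_Z(ℓ_X(x'), ℓ_Y(y')) ν^{(k)}_{x,y}(x',y') γ(x,y) ≤ dis^{(k)}(γ, ν^{(k)}). Then d_WL^(k)((𝒳,ℓ_X),(𝒴,ℓ_Y)) ≤ d_GW^(k)((𝒳,d_X),(𝒴,d_Y)). -/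

import Mathlib

open scoped BigOperators NNReal

namespace WLGW

variable {X Y W : Type*}

/-- A probability mass function on a finite type. -/
def IsPMF [Fintype X] (p : X → ℝ) : Prop :=
  (∀ x, 0 ≤ p x) ∧ ∑ x, p x = 1

/-- `γ` is a coupling of `p` and `q`. -/
def IsCoupling [Fintype X] [Fintype Y] (p : X → ℝ) (q : Y → ℝ) (γ : X → Y → ℝ) : Prop :=
  (∀ x y, 0 ≤ γ x y) ∧ (∀ x, ∑ y, γ x y = p x) ∧ (∀ y, ∑ x, γ x y = q y)

/-- `(m, μ)` is a measure Markov chain: each `m x` is a pmf, and `μ` is a fully supported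
stationary pmf. -/
def IsMMC [Fintype X] (m : X → X → ℝ) (μ : X → ℝ) : Prop :=
  (∀ x, IsPMF (m x)) ∧ IsPMF μ ∧ (∀ x, 0 < μ x) ∧ (∀ x', ∑ x, m x x' * μ x = μ x')

/-- `dX` is a metric on the finite type `X`. -/
def IsMetricOn [Fintype X] (dX : X → X → ℝ) : Prop :=
  (∀ x, dX x x = 0) ∧ (∀ x y, dX x y = dX y x) ∧ (∀ x y, x ≠ y → 0 < dX x y) ∧
    (∀ x y z, dX x z ≤ dX x y + dX y z)

/-- The iterated Weisfeiler–Lehman cost `D_k`. -/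
noncomputable def costIter [Fintype X] [Fintype Y] (mX : X → X → ℝ) (mY : Y → Y → ℝ)
    (D0 : X → Y → ℝ) : ℕ → X → Y → ℝ
  | 0 => D0
  | k + 1 => fun x y => sInf {r : ℝ | ∃ γ : X → Y → ℝ, IsCoupling (mX x) (mY y) γ ∧
      r = ∑ x', ∑ y', costIter mX mY D0 k x' y' * γ x' y'}

/-- The Weisfeiler–Lehman distance of depth `k` between two labeled measure Markov chains. -/
noncomputable def dWL {Z : Type*} [PseudoMetricSpace Z] [Fintype X] [Fintype Y]
    (mX : X → X → ℝ) (μX : X → ℝ) (ℓX : X → Z)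
    (mY : Y → Y → ℝ) (μY : Y → ℝ) (ℓY : Y → Z) (k : ℕ) : ℝ :=
  sInf {r : ℝ | ∃ γ : X → Y → ℝ, IsCoupling μX μY γ ∧
      r = ∑ x, ∑ y, costIter mX mY (fun x y => dist (ℓX x) (ℓY y)) k x y * γ x y}

/-- The absolute Weisfeiler–Lehman distance. -/
noncomputable def dWLsup {Z : Type*} [PseudoMetricSpace Z] [Fintype X] [Fintype Y]
    (mX : X → X → ℝ) (μX : X → ℝ) (ℓX : X → Z)
    (mY : Y → Y → ℝ) (μY : Y → ℝ) (ℓY : Y → Z) : ℝ :=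
  ⨆ k : ℕ, dWL mX μX ℓX mY μY ℓY k

/-- Isomorphism of labeled measure Markov chains. -/
def LMMCIso {Z : Type*} [Fintype X] [Fintype Y]
    (mX : X → X → ℝ) (μX : X → ℝ) (ℓX : X → Z)
    (mY : Y → Y → ℝ) (μY : Y → ℝ) (ℓY : Y → Z) : Prop :=
  ∃ ψ : X ≃ Y, (∀ x, ℓY (ψ x) = ℓX x) ∧ (∀ x x', mY (ψ x) (ψ x') = mX x x') ∧
    (∀ x, μY (ψ x) = μX x)

/-- The `q`-Markov kernel of a finite simple graph. -/
noncomputable def graphKernel {V : Type*} [Fintype V] [DecidableEq V] (G : SimpleGraph V) [DecidableRel G.Adj]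
    (q : ℝ) (v v' : V) : ℝ :=
  if G.degree v = 0 then (if v' = v then 1 else 0)
  else (if v' = v then q else 0) + (if G.Adj v v' then (1 - q) / (G.degree v : ℝ) else 0)

/-- The stationary degree measure of a finite simple graph. -/
noncomputable def graphMu {V : Type*} [Fintype V] (G : SimpleGraph V) [DecidableRel G.Adj]
    (v : V) : ℝ :=
  ((max (G.degree v) 1 : ℕ) : ℝ) / ∑ v', ((max (G.degree v') 1 : ℕ) : ℝ)

/-- The type of depth-`k` Weisfeiler–Lehman labels over an initial label set `Z`. -/
def WLType (Z : Type*) : ℕ → Type _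
  | 0 => Z
  | k + 1 => WLType Z k × Multiset (WLType Z k)

/-- The Weisfeiler–Lehman label hierarchy `ℓ^k` of a labeled graph. -/
def wlLabel {V Z : Type*} [Fintype V] (G : SimpleGraph V) [DecidableRel G.Adj] (ℓ : V → Z) :
    (k : ℕ) → V → WLType Z k
  | 0 => ℓ
  | k + 1 => fun v => (wlLabel G ℓ k v, (G.neighborFinset v).val.map (wlLabel G ℓ k))

/-- The multiset `L_k((G, ℓ))` of depth-`k` WL labels of all vertices. -/
def wlMultiset {V Z : Type*} [Fintype V] (G : SimpleGraph V) [DecidableRel G.Adj]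
    (ℓ : V → Z) (k : ℕ) : Multiset (WLType Z k) :=
  Finset.univ.val.map (wlLabel G ℓ k)

/-- The WL test distinguishes two labeled graphs. -/
def WLDistinguishes {V₁ V₂ Z : Type*} [Fintype V₁] [Fintype V₂]
    (G₁ : SimpleGraph V₁) [DecidableRel G₁.Adj] (ℓ₁ : V₁ → Z)
    (G₂ : SimpleGraph V₂) [DecidableRel G₂.Adj] (ℓ₂ : V₂ → Z) : Prop :=
  ∃ k, wlMultiset G₁ ℓ₁ k ≠ wlMultiset G₂ ℓ₂ k

/-- The relabeling `ℓ^g(v) = g(ℓ(v), deg v, |V|)`. -/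
def relabel {V Z Z₁ : Type*} [Fintype V] (G : SimpleGraph V) [DecidableRel G.Adj]
    (ℓ : V → Z) (g : Z × ℕ × ℕ → Z₁) : V → Z₁ :=
  fun v => g (ℓ v, G.degree v, Fintype.card V)

/-- `kpow m k = m^{⊗k}`, the `k`-step Markov kernel (`kpow m 0` is the identity kernel). -/
def kpow [Fintype X] [DecidableEq X] (m : X → X → ℝ) : ℕ → X → X → ℝ
  | 0 => fun x x' => if x' = x then 1 else 0
  | k + 1 => fun x x'' => ∑ x', kpow m k x' x'' * m x x'

/-- The Wasserstein distance between the pushforwards `(ℓX)_# p` and `(ℓY)_# q`, expressed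
through couplings of `p` and `q`. -/
noncomputable def wassersteinCost {Z : Type*} [PseudoMetricSpace Z] [Fintype X] [Fintype Y]
    (ℓX : X → Z) (ℓY : Y → Z) (p : X → ℝ) (q : Y → ℝ) : ℝ :=
  sInf {r : ℝ | ∃ γ : X → Y → ℝ, IsCoupling p q γ ∧
      r = ∑ x, ∑ y, dist (ℓX x) (ℓY y) * γ x y}

/-- The lower bound `d_WLLB^(k)` for the WL distance. -/
noncomputable def dWLLB {Z : Type*} [PseudoMetricSpace Z] [Fintype X] [Fintype Y]
    [DecidableEq X] [DecidableEq Y]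
    (mX : X → X → ℝ) (μX : X → ℝ) (ℓX : X → Z)
    (mY : Y → Y → ℝ) (μY : Y → ℝ) (ℓY : Y → Z) (k : ℕ) : ℝ :=
  sInf {r : ℝ | ∃ γ : X → Y → ℝ, IsCoupling μX μY γ ∧
      r = ∑ x, ∑ y, wassersteinCost ℓX ℓY (kpow mX k x) (kpow mY k y) * γ x y}

/-- Dimension sequence of an MCNN: `mcnnDim d dims 0 = d`, then `dims`. -/
def mcnnDim (d : ℕ) (dims : ℕ → ℕ) : ℕ → ℕ
  | 0 => d
  | i + 1 => dims i

/-- A `k`-layer Markov chain neural network on `ℝ^d`-LMMCs: Lipschitz maps `φ_1, …, φ_{k+1}`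
followed by a continuous map `ψ`. -/
structure MCNN (d k : ℕ) where
  dims : ℕ → ℕ
  φ : (i : ℕ) → EuclideanSpace ℝ (Fin (mcnnDim d dims i)) →
      EuclideanSpace ℝ (Fin (mcnnDim d dims (i + 1)))
  φ_lip : ∀ i, ∃ K : ℝ≥0, LipschitzWith K (φ i)
  ψ : EuclideanSpace ℝ (Fin (mcnnDim d dims (k + 1))) → ℝ
  ψ_cont : Continuous ψ

/-- Labels after `j` layers of an MCNN (the map `F_{φ_j} ∘ ⋯ ∘ F_{φ_1}`). -/
noncomputable def mcnnLabel {X : Type*} [Fintype X] {d k : ℕ} (N : MCNN d k)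
    (m : X → X → ℝ) (ℓ : X → EuclideanSpace ℝ (Fin d)) :
    (j : ℕ) → X → EuclideanSpace ℝ (Fin (mcnnDim d N.dims j))
  | 0 => ℓ
  | j + 1 => fun x => ∑ x', m x x' • N.φ j (mcnnLabel N m ℓ j x')

/-- Evaluation of an MCNN on an `ℝ^d`-LMMC: `ψ ∘ S_{φ_{k+1}} ∘ F_{φ_k} ∘ ⋯ ∘ F_{φ_1}`. -/
noncomputable def mcnnEval {X : Type*} [Fintype X] {d k : ℕ} (N : MCNN d k)
    (m : X → X → ℝ) (μ : X → ℝ) (ℓ : X → EuclideanSpace ℝ (Fin d)) : ℝ :=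
  N.ψ (∑ x, μ x • N.φ k (mcnnLabel N m ℓ k x))

/-- `k`-step couplings between the Markov kernels `mX` and `mY` (defined for `k ≥ 1`). -/
def IsStepCoupling [Fintype X] [Fintype Y] (mX : X → X → ℝ) (mY : Y → Y → ℝ) :
    ℕ → (X → Y → X → Y → ℝ) → Prop
  | 0, _ => False
  | 1, ν => ∀ x y, IsCoupling (mX x) (mY y) (ν x y)
  | k + 2, ν => ∃ νk ν1 : X → Y → X → Y → ℝ,
      IsStepCoupling mX mY (k + 1) νk ∧ (∀ x y, IsCoupling (mX x) (mY y) (ν1 x y)) ∧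
      ν = fun x y x' y' => ∑ x'', ∑ y'', νk x'' y'' x' y' * ν1 x y x'' y''

/-- The `k`-distortion `dis^(k)(γ, ν)`. -/
def disk [Fintype X] [Fintype Y] (dX : X → X → ℝ) (dY : Y → Y → ℝ)
    (γ : X → Y → ℝ) (ν : X → Y → X → Y → ℝ) : ℝ :=
  ∑ x, ∑ y, ∑ x'', ∑ y'', ∑ x', ∑ y',
    |dX x x' - dY y y'| * ν x'' y'' x' y' * γ x'' y'' * γ x y

/-- The `k`-Gromov–Wasserstein distance between Markov chain metric spaces. -/
noncomputable def dGWk [Fintype X] [Fintype Y]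
    (mX : X → X → ℝ) (dX : X → X → ℝ) (μX : X → ℝ)
    (mY : Y → Y → ℝ) (dY : Y → Y → ℝ) (μY : Y → ℝ) (k : ℕ) : ℝ :=
  sInf {r : ℝ | ∃ (γ : X → Y → ℝ) (ν : X → Y → X → Y → ℝ),
      IsCoupling μX μY γ ∧ IsStepCoupling mX mY k ν ∧ r = disk dX dY γ ν}

/-- The absolute Gromov–Wasserstein distance between MCMSs: `sup_{k ≥ 1} d_GW^(k)`. -/
noncomputable def dGWMCMS [Fintype X] [Fintype Y]
    (mX : X → X → ℝ) (dX : X → X → ℝ) (μX : X → ℝ)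
    (mY : Y → Y → ℝ) (dY : Y → Y → ℝ) (μY : Y → ℝ) : ℝ :=
  ⨆ k : ℕ, dGWk mX dX μX mY dY μY (k + 1)

/-- Isomorphism of Markov chain metric spaces. -/
def MCMSIso [Fintype X] [Fintype Y]
    (mX : X → X → ℝ) (dX : X → X → ℝ) (μX : X → ℝ)
    (mY : Y → Y → ℝ) (dY : Y → Y → ℝ) (μY : Y → ℝ) : Prop :=
  ∃ ψ : X ≃ Y, (∀ x x', dY (ψ x) (ψ x') = dX x x') ∧
    (∀ x x', mY (ψ x) (ψ x') = mX x x') ∧ (∀ x, μY (ψ x) = μX x)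

/-- The decoupled Gromov–Wasserstein distance between finite metric measure spaces. -/
noncomputable def dGWbi [Fintype X] [Fintype Y]
    (dX : X → X → ℝ) (μX : X → ℝ) (dY : Y → Y → ℝ) (μY : Y → ℝ) : ℝ :=
  sInf {r : ℝ | ∃ γ γ' : X → Y → ℝ, IsCoupling μX μY γ ∧ IsCoupling μX μY γ' ∧
      r = ∑ x, ∑ y, ∑ x', ∑ y', |dX x x' - dY y y'| * γ' x' y' * γ x y}

/-- `k`-step couplings between the measures `μX` and `μY`
(`k = 0` gives ordinary couplings). -/
def IsMeasureStepCoupling [Fintype X] [Fintype Y] (mX : X → X → ℝ) (mY : Y → Y → ℝ)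
    (μX : X → ℝ) (μY : Y → ℝ) : ℕ → (X → Y → ℝ) → Prop
  | 0, γ => IsCoupling μX μY γ
  | k + 1, γk => ∃ (γ : X → Y → ℝ) (ν : X → Y → X → Y → ℝ),
      IsCoupling μX μY γ ∧ IsStepCoupling mX mY (k + 1) ν ∧
      γk = fun x' y' => ∑ x, ∑ y, ν x y x' y' * γ x y

/-- The WWL label iteration. -/
noncomputable def wwlLabel {V : Type*} [Fintype V] {d : ℕ} (G : SimpleGraph V)
    [DecidableRel G.Adj] (ℓ : V → EuclideanSpace ℝ (Fin d)) :
    ℕ → V → EuclideanSpace ℝ (Fin d)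
  | 0 => ℓ
  | i + 1 => fun v => (1 / 2 : ℝ) •
      (wwlLabel G ℓ i v + ((G.degree v : ℝ))⁻¹ • ∑ v' ∈ G.neighborFinset v, wwlLabel G ℓ i v')

/-- The stacked WWL label `L^k_G = (ℓ^0, …, ℓ^k)`, valued in Euclidean `ℝ^{d(k+1)}`. -/
noncomputable def stackedLabel {V : Type*} [Fintype V] {d : ℕ} (G : SimpleGraph V)
    [DecidableRel G.Adj] (ℓ : V → EuclideanSpace ℝ (Fin d)) (k : ℕ) (v : V) :
    EuclideanSpace ℝ (Fin (k + 1) × Fin d) :=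
  WithLp.toLp 2 fun p => wwlLabel G ℓ (p.1 : ℕ) v p.2

lemma prod_isCoupling [Fintype X] [Fintype Y] {p : X → ℝ} {q : Y → ℝ}
    (hp : IsPMF p) (hq : IsPMF q) : IsCoupling p q (fun x y => p x * q y) := by
  refine ⟨fun x y => mul_nonneg (hp.1 x) (hq.1 y), fun x => ?_, fun y => ?_⟩
  · rw [← Finset.mul_sum, hq.2, mul_one]
  · rw [← Finset.sum_mul, hp.2, one_mul]

lemma sum_swap4 [Fintype X] [Fintype Y] (F : X → Y → X → Y → ℝ) :
    ∑ a, ∑ b, ∑ c, ∑ e, F a b c e = ∑ c, ∑ e, ∑ a, ∑ b, F a b c e := by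
  trans ∑ a, ∑ c, ∑ b, ∑ e, F a b c e
  · exact Finset.sum_congr rfl fun a _ => Finset.sum_comm
  trans ∑ c, ∑ a, ∑ b, ∑ e, F a b c e
  · exact Finset.sum_comm
  refine Finset.sum_congr rfl fun c _ => ?_
  trans ∑ a, ∑ e, ∑ b, F a b c e
  · exact Finset.sum_congr rfl fun a _ => Finset.sum_comm
  exact Finset.sum_comm

lemma step_nonneg [Fintype X] [Fintype Y] {mX : X → X → ℝ} {mY : Y → Y → ℝ} :
    ∀ (k : ℕ) (ν : X → Y → X → Y → ℝ), IsStepCoupling mX mY k ν →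
      ∀ x y x' y', 0 ≤ ν x y x' y'
  | 0, _, h => h.elim
  | 1, ν, h => fun x y x' y' => (h x y).1 x' y'
  | (k+2), _, ⟨νk, ν1, hνk, hν1, rfl⟩ => fun x y x' y' => by
      apply Finset.sum_nonneg; intro x'' _
      apply Finset.sum_nonneg; intro y'' _
      exact mul_nonneg (step_nonneg (k+1) νk hνk x'' y'' x' y') ((hν1 x y).1 x'' y'')

lemma exists_step [Fintype X] [Fintype Y] {mX : X → X → ℝ} {mY : Y → Y → ℝ}
    (hmX : ∀ x, IsPMF (mX x)) (hmY : ∀ y, IsPMF (mY y)) :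
    ∀ k : ℕ, 1 ≤ k → ∃ ν : X → Y → X → Y → ℝ, IsStepCoupling mX mY k ν := by
  have h1 : ∀ x y, IsCoupling (mX x) (mY y) (fun x' y' => mX x x' * mY y y') :=
    fun x y => prod_isCoupling (hmX x) (hmY y)
  intro k hk
  induction k with
  | zero => omega
  | succ n ih =>
    rcases Nat.eq_zero_or_pos n with rfl | hn
    · exact ⟨fun x y x' y' => mX x x' * mY y y', h1⟩
    · obtain ⟨νn, hνn⟩ := ih hn
      obtain ⟨m, rfl⟩ : ∃ m, n = m + 1 := ⟨n - 1, by omega⟩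
      exact ⟨_, νn, fun x y x' y' => mX x x' * mY y y', hνn, h1, rfl⟩

lemma costIter_nonneg {Z : Type*} [PseudoMetricSpace Z] [Fintype X] [Fintype Y]
    (mX : X → X → ℝ) (mY : Y → Y → ℝ) (ℓX : X → Z) (ℓY : Y → Z) :
    ∀ (k : ℕ) (x : X) (y : Y),
      0 ≤ costIter mX mY (fun x y => dist (ℓX x) (ℓY y)) k x y := by
  intro k
  induction k with
  | zero => exact fun x y => dist_nonneg
  | succ n ih =>
    intro x y
    apply Real.sInf_nonneg
    rintro r ⟨γ, hγ, rfl⟩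
    apply Finset.sum_nonneg; intro x' _
    apply Finset.sum_nonneg; intro y' _
    exact mul_nonneg (ih x' y') (hγ.1 x' y')

lemma costIter_le_step {Z : Type*} [PseudoMetricSpace Z] [Fintype X] [Fintype Y]
    {mX : X → X → ℝ} {mY : Y → Y → ℝ} (ℓX : X → Z) (ℓY : Y → Z) :
    ∀ (k : ℕ) (ν : X → Y → X → Y → ℝ), IsStepCoupling mX mY k ν → ∀ x y,
      costIter mX mY (fun x y => dist (ℓX x) (ℓY y)) k x y ≤
        ∑ x', ∑ y', dist (ℓX x') (ℓY y') * ν x y x' y'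
  | 0, _, h => h.elim
  | 1, ν, h => fun x y => by
      apply csInf_le
      · refine ⟨0, ?_⟩
        rintro r ⟨γ, hγ, rfl⟩
        apply Finset.sum_nonneg; intro x' _
        apply Finset.sum_nonneg; intro y' _
        exact mul_nonneg dist_nonneg (hγ.1 x' y')
      · exact ⟨ν x y, h x y, rfl⟩
  | (k+2), _, ⟨νk, ν1, hνk, hν1, rfl⟩ => fun x y => by
      have step1 : costIter mX mY (fun x y => dist (ℓX x) (ℓY y)) (k+2) x y ≤
          ∑ x'', ∑ y'', costIter mX mY (fun x y => dist (ℓX x) (ℓY y)) (k+1) x'' y'' *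
            ν1 x y x'' y'' := by
        apply csInf_le
        · refine ⟨0, ?_⟩
          rintro r ⟨γ, hγ, rfl⟩
          apply Finset.sum_nonneg; intro x' _
          apply Finset.sum_nonneg; intro y' _
          exact mul_nonneg (costIter_nonneg mX mY ℓX ℓY _ _ _) (hγ.1 x' y')
        · exact ⟨ν1 x y, hν1 x y, rfl⟩
      refine step1.trans ?_
      have step2 : ∑ x'', ∑ y'',
          costIter mX mY (fun x y => dist (ℓX x) (ℓY y)) (k+1) x'' y'' * ν1 x y x'' y'' ≤
          ∑ x'', ∑ y'', (∑ x', ∑ y', dist (ℓX x') (ℓY y') * νk x'' y'' x' y') *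
            ν1 x y x'' y'' := by
        apply Finset.sum_le_sum; intro x'' _
        apply Finset.sum_le_sum; intro y'' _
        exact mul_le_mul_of_nonneg_right
          (costIter_le_step ℓX ℓY (k+1) νk hνk x'' y'') ((hν1 x y).1 x'' y'')
      refine step2.trans (le_of_eq ?_)
      simp only [Finset.sum_mul, Finset.mul_sum, mul_assoc]
      exact sum_swap4 _

theorem stable_label_dWL_le_dGWk {X Y Z : Type*} [Fintype X] [Fintype Y] [MetricSpace Z]
    (mX : X → X → ℝ) (dX : X → X → ℝ) (μX : X → ℝ) (ℓX : X → Z)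
    (mY : Y → Y → ℝ) (dY : Y → Y → ℝ) (μY : Y → ℝ) (ℓY : Y → Z)
    (hX : IsMMC mX μX) (hY : IsMMC mY μY)
    (hdX : IsMetricOn dX) (hdY : IsMetricOn dY)
    (k : ℕ) (hk : 1 ≤ k)
    (hstable : ∀ (γ : X → Y → ℝ) (ν : X → Y → X → Y → ℝ),
      IsCoupling μX μY γ → IsStepCoupling mX mY k ν →
      ∑ x, ∑ y, ∑ x', ∑ y', dist (ℓX x') (ℓY y') * ν x y x' y' * γ x y ≤ disk dX dY γ ν) :
    dWL mX μX ℓX mY μY ℓY k ≤ dGWk mX dX μX mY dY μY k := by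
  have hD0 := costIter_nonneg mX mY ℓX ℓY
  -- the GW feasible set is nonempty
  obtain ⟨ν₀, hν₀⟩ := exists_step hX.1 hY.1 k hk
  have hγ₀ : IsCoupling μX μY (fun x y => μX x * μY y) :=
    prod_isCoupling hX.2.1 hY.2.1
  refine le_csInf ⟨disk dX dY (fun x y => μX x * μY y) ν₀,
    ⟨fun x y => μX x * μY y, ν₀, hγ₀, hν₀, rfl⟩⟩ ?_
  rintro r ⟨γ, ν, hγ, hν, rfl⟩
  have h1 : dWL mX μX ℓX mY μY ℓY k ≤
      ∑ x, ∑ y, costIter mX mY (fun x y => dist (ℓX x) (ℓY y)) k x y * γ x y := by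
    apply csInf_le
    · refine ⟨0, ?_⟩
      rintro r ⟨γ', hγ', rfl⟩
      apply Finset.sum_nonneg; intro x _
      apply Finset.sum_nonneg; intro y _
      exact mul_nonneg (hD0 k x y) (hγ'.1 x y)
    · exact ⟨γ, hγ, rfl⟩
  refine h1.trans ?_
  have h2 : ∑ x, ∑ y, costIter mX mY (fun x y => dist (ℓX x) (ℓY y)) k x y * γ x y ≤
      ∑ x, ∑ y, (∑ x', ∑ y', dist (ℓX x') (ℓY y') * ν x y x' y') * γ x y := by
    apply Finset.sum_le_sum; intro x _
    apply Finset.sum_le_sum; intro y _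
    exact mul_le_mul_of_nonneg_right (costIter_le_step ℓX ℓY k ν hν x y) (hγ.1 x y)
  refine h2.trans ?_
  have h3 : ∑ x, ∑ y, (∑ x', ∑ y', dist (ℓX x') (ℓY y') * ν x y x' y') * γ x y =
      ∑ x, ∑ y, ∑ x', ∑ y', dist (ℓX x') (ℓY y') * ν x y x' y' * γ x y := by
    refine Finset.sum_congr rfl fun x _ => Finset.sum_congr rfl fun y _ => ?_
    rw [Finset.sum_mul]
    exact Finset.sum_congr rfl fun x' _ => Finset.sum_mul _ _ _
  rw [h3]
  exact hstable γ ν hγ hν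


end WLGW
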